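/- Let B be a real symmetric N×N positive definite matrix with all entries positive, minimal entry b_min. Suppose there exist c > 0, q ∈ ℝ, γ > 0 such that for all 1 ≤ k ≤ K, ∑_{I∈I_k^+} a_I + (b_max/b_min)^{2k} ∑_{I∈I_k^−} a_I ≥ c k^q γ^k / (2k)!, where I_k^± = {I : |I| = 2k, ±a_I ≥ 0}. If K = ∞, further assume γ b_min² < 1. Then μ = ∑_{k=0}^K ∑_{|I|=2k} a_I Haf(B_I)² ≥ a_0 + (c/√π) e^{1/25 − 1/6} · Li_{1/2−q, K}(γ b_min²). -/

import Mathlib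

open scoped Classical
open Real

/-- The hafnian of an `n × n` real matrix (`0` when `n` is odd, `1` for the empty matrix). -/
noncomputable def hafnian {n : ℕ} (M : Matrix (Fin n) (Fin n) ℝ) : ℝ :=
  if Even n then
    (1 / ((n / 2).factorial * 2 ^ (n / 2) : ℝ)) *
      ∑ σ : Equiv.Perm (Fin n), ∏ j : Fin (n / 2),
        M (σ ⟨2 * j.1, by have := j.2; omega⟩) (σ ⟨2 * j.1 + 1, by have := j.2; omega⟩)
  else 0

/-- An equivalence `(Σ n, Fin (I n)) ≃ Fin (∑ n, I n)` used to index repeated rows/columns. -/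
noncomputable def sigmaFinEquiv {N : ℕ} (I : Fin N → ℕ) :
    (Σ n : Fin N, Fin (I n)) ≃ Fin (∑ n, I n) :=
  Fintype.equivFinOfCardEq (by simp)

/-- The matrix `B_I` obtained from `B` by repeating row/column `n` exactly `I n` times. -/
noncomputable def repMat {N : ℕ} (B : Matrix (Fin N) (Fin N) ℝ) (I : Fin N → ℕ) :
    Matrix (Fin (∑ n, I n)) (Fin (∑ n, I n)) ℝ :=
  fun a b => B ((sigmaFinEquiv I).symm a).1 ((sigmaFinEquiv I).symm b).1

/-- The truncated polylogarithm `Li_{s,K}(z) = ∑_{1 ≤ k ≤ K} z^k / k^s` (`K ∈ ℕ∞`). -/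
noncomputable def polylog (s : ℝ) (K : ℕ∞) (z : ℝ) : ℝ :=
  ∑' k : ℕ, if 1 ≤ k ∧ (k : ℕ∞) ≤ K then z ^ k / (k : ℝ) ^ s else 0

/-- If `B` is positive definite with positive entries (min entry `b_min`, max entry `b_max`)
and for all `1 ≤ k ≤ K`,
`∑_{I ∈ I_k^+} a_I + (b_max/b_min)^{2k} ∑_{I ∈ I_k^-} a_I ≥ c k^q γ^k/(2k)!`,
with `γ b_min² < 1` when `K = ∞`, then
`μ = ∑_{k=0}^K ∑_{|I|=2k} a_I Haf(B_I)² ≥ a_0 + (c/√π) e^{1/25 - 1/6} Li_{1/2-q,K}(γ b_min²)`. -/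
lemma numC : Real.exp (1 / 25 - 1 / 6) ≤ Real.sqrt π / 2 := by
  have ht : (319/300 : ℝ) ≤ Real.exp (19/300) := by
    have := Real.add_one_le_exp (19/300 : ℝ)
    linarith
  have hpow : ((319:ℝ)/300)^4 ≤ Real.exp (19/75) := by
    calc ((319:ℝ)/300)^4 ≤ (Real.exp (19/300))^4 := by
          apply pow_le_pow_left₀ (by norm_num) ht
      _ = Real.exp (4 * (19/300)) := by
          rw [← Real.exp_nat_mul]; norm_num
      _ = Real.exp (19/75) := by norm_num
  have hpi : (3.141592 : ℝ) ≤ π := Real.pi_gt_d6.le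
  have key : Real.exp (1/25 - 1/6) ^ 2 ≤ π / 4 := by
    have h2 : Real.exp (1/25 - 1/6) ^ 2 = Real.exp (-(19/75)) := by
      rw [← Real.exp_nat_mul]; norm_num
    rw [h2, Real.exp_neg, inv_le_iff_one_le_mul₀ (Real.exp_pos _)]
    calc (1:ℝ) ≤ (π/4) * ((319:ℝ)/300)^4 := by nlinarith
      _ ≤ (π/4) * Real.exp (19/75) := by
          apply mul_le_mul_of_nonneg_left hpow (by positivity)
  calc Real.exp (1/25 - 1/6)
      = Real.sqrt (Real.exp (1/25 - 1/6) ^ 2) := (Real.sqrt_sq (Real.exp_pos _).le).symm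
    _ ≤ Real.sqrt (π/4) := Real.sqrt_le_sqrt key
    _ = Real.sqrt π / 2 := by
        rw [Real.sqrt_div Real.pi_pos.le, show (4:ℝ) = 2^2 by norm_num,
          Real.sqrt_sq (by norm_num : (0:ℝ) ≤ 2)]

lemma lemB : ∀ k : ℕ, 1 ≤ k → (16:ℝ) ^ k ≤ 4 * k * (Nat.centralBinom k : ℝ) ^ 2 := by
  intro k hk
  induction k with
  | zero => omega
  | succ n ih =>
    rcases Nat.lt_or_ge n 1 with h | h
    · interval_cases n
      · norm_num [Nat.centralBinom]
    · have IH := ih h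
      have hid : ((n+1 : ℕ) : ℝ) * (Nat.centralBinom (n+1) : ℝ)
          = 2 * (2*(n:ℝ)+1) * (Nat.centralBinom n : ℝ) := by
        exact_mod_cast congrArg (Nat.cast : ℕ → ℝ) (Nat.succ_mul_centralBinom_succ n)
      have hC : (0:ℝ) ≤ (Nat.centralBinom n : ℝ) := Nat.cast_nonneg _
      have h16 : (0:ℝ) ≤ (16:ℝ)^n := by positivity
      push_cast at hid ⊢
      have hsq : (((n:ℝ)+1) * (Nat.centralBinom (n+1) : ℝ))^2
          = (2*(2*(n:ℝ)+1) * (Nat.centralBinom n : ℝ))^2 := by rw [hid]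
      rw [pow_succ]
      nlinarith [hsq, mul_le_mul_of_nonneg_left IH (by positivity : (0:ℝ) ≤ (n:ℝ)+1),
        sq_nonneg ((Nat.centralBinom n : ℝ)), sq_nonneg ((n:ℝ)+1), hC]

lemma hafnian_bounds {m : ℕ} (hE : Even m) (M : Matrix (Fin m) (Fin m) ℝ)
    (lo hi : ℝ) (hlo : 0 ≤ lo) (h1 : ∀ i j, lo ≤ M i j) (h2 : ∀ i j, M i j ≤ hi) :
    lo ^ (m / 2) * ((m.factorial : ℝ) / ((m / 2).factorial * 2 ^ (m / 2)))
      ≤ hafnian M ∧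
    hafnian M ≤ hi ^ (m / 2) * ((m.factorial : ℝ) / ((m / 2).factorial * 2 ^ (m / 2))) := by
  have hprod : ∀ (f g : Fin (m/2) → Fin m),
      lo ^ (m/2) ≤ ∏ j : Fin (m/2), M (f j) (g j)
        ∧ (∏ j : Fin (m/2), M (f j) (g j)) ≤ hi ^ (m/2) := by
    intro f g
    constructor
    · calc lo ^ (m/2) = ∏ _j : Fin (m/2), lo := by
            rw [Finset.prod_const, Finset.card_univ, Fintype.card_fin]
        _ ≤ ∏ j : Fin (m/2), M (f j) (g j) :=
            Finset.prod_le_prod (fun _ _ => hlo) (fun j _ => h1 _ _)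
    · calc (∏ j : Fin (m/2), M (f j) (g j)) ≤ ∏ _j : Fin (m/2), hi :=
            Finset.prod_le_prod (fun j _ => le_trans hlo (h1 _ _)) (fun j _ => h2 _ _)
        _ = hi ^ (m/2) := by rw [Finset.prod_const, Finset.card_univ, Fintype.card_fin]
  have hcard : (Finset.univ : Finset (Equiv.Perm (Fin m))).card = m.factorial := by
    simp [Finset.card_univ, Fintype.card_perm]
  have hD : (0:ℝ) < ((m / 2).factorial * 2 ^ (m / 2) : ℝ) := by positivity
  rw [hafnian, if_pos hE]
  set S := ∑ σ : Equiv.Perm (Fin m), ∏ j : Fin (m / 2),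
        M (σ ⟨2 * j.1, by have := j.2; omega⟩) (σ ⟨2 * j.1 + 1, by have := j.2; omega⟩) with hSdef
  have hlowS : (m.factorial : ℝ) * lo ^ (m/2) ≤ S := by
    calc (m.factorial : ℝ) * lo ^ (m/2)
        = ∑ _σ : Equiv.Perm (Fin m), lo ^ (m/2) := by
          rw [Finset.sum_const, hcard, nsmul_eq_mul]
      _ ≤ S := Finset.sum_le_sum (fun σ _ => (hprod _ _).1)
  have hhiS : S ≤ (m.factorial : ℝ) * hi ^ (m/2) := by
    calc S ≤ ∑ _σ : Equiv.Perm (Fin m), hi ^ (m/2) :=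
          Finset.sum_le_sum (fun σ _ => (hprod _ _).2)
      _ = (m.factorial : ℝ) * hi ^ (m/2) := by
          rw [Finset.sum_const, hcard, nsmul_eq_mul]
  constructor
  · calc lo ^ (m / 2) * ((m.factorial : ℝ) / ((m / 2).factorial * 2 ^ (m / 2)))
        = (1 / ((m / 2).factorial * 2 ^ (m / 2) : ℝ)) * ((m.factorial : ℝ) * lo ^ (m/2)) := by
          push_cast; ring
      _ ≤ _ := by
          apply mul_le_mul_of_nonneg_left hlowS (by positivity)
  · calc (1 / ((m / 2).factorial * 2 ^ (m / 2) : ℝ)) * S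
        ≤ (1 / ((m / 2).factorial * 2 ^ (m / 2) : ℝ)) * ((m.factorial : ℝ) * hi ^ (m/2)) := by
          apply mul_le_mul_of_nonneg_left hhiS (by positivity)
      _ = hi ^ (m / 2) * ((m.factorial : ℝ) / ((m / 2).factorial * 2 ^ (m / 2))) := by
          push_cast; ring

lemma hafnian_bounds2 {m k : ℕ} (hm : m = 2 * k) (M : Matrix (Fin m) (Fin m) ℝ)
    (lo hi : ℝ) (hlo : 0 ≤ lo) (h1 : ∀ i j, lo ≤ M i j) (h2 : ∀ i j, M i j ≤ hi) :
    lo ^ k * (((2 * k).factorial : ℝ) / ((k.factorial : ℝ) * 2 ^ k)) ≤ hafnian M ∧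
    hafnian M ≤ hi ^ k * (((2 * k).factorial : ℝ) / ((k.factorial : ℝ) * 2 ^ k)) := by
  subst hm
  have hb := hafnian_bounds (even_two_mul k) M lo hi hlo h1 h2
  rw [show 2 * k / 2 = k by omega] at hb
  exact hb

lemma hafnian_size_zero {m : ℕ} (hm : m = 0) (M : Matrix (Fin m) (Fin m) ℝ) :
    hafnian M = 1 := by
  subst hm
  rw [hafnian, if_pos Even.zero]
  simp

lemma perk (N : ℕ) (hN : 0 < N) (B : Matrix (Fin N) (Fin N) ℝ)
    (bmin bmax : ℝ) (hbminpos : 0 < bmin)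
    (hbmin_lb : ∀ i j, bmin ≤ B i j) (hbmax_ub : ∀ i j, B i j ≤ bmax)
    (a : (Fin N → ℕ) → ℝ) (c q γ : ℝ) (hc : 0 < c) (hγ : 0 < γ)
    (k : ℕ) (hk1 : 1 ≤ k)
    (hb : c * (k : ℝ) ^ q * γ ^ k / ((2 * k).factorial : ℝ)
        ≤ (∑ I ∈ (Finset.Nat.antidiagonalTuple N (2 * k)).filter (fun I => 0 ≤ a I), a I)
          + (bmax / bmin) ^ (2 * k) *
            ∑ I ∈ (Finset.Nat.antidiagonalTuple N (2 * k)).filter (fun I => a I ≤ 0), a I) :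
    (c / Real.sqrt π) * Real.exp (1 / 25 - 1 / 6)
        * ((γ * bmin ^ 2) ^ k / (k : ℝ) ^ (1 / 2 - q : ℝ))
      ≤ ∑ I ∈ Finset.Nat.antidiagonalTuple N (2 * k), a I * (hafnian (repMat B I)) ^ 2 := by
  have i0 : Fin N := ⟨0, hN⟩
  have hbmaxpos : 0 < bmax := lt_of_lt_of_le hbminpos ((hbmin_lb i0 i0).trans (hbmax_ub i0 i0))
  set T := Finset.Nat.antidiagonalTuple N (2 * k) with hT
  set F : ℝ := ((2 * k).factorial : ℝ) / ((k.factorial : ℝ) * 2 ^ k) with hF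
  have hFpos : 0 < F := by rw [hF]; positivity
  set h := bmin ^ k * F with hh
  set H := bmax ^ k * F with hH
  have hhpos : 0 < h := by rw [hh]; positivity
  have hHpos : 0 < H := by rw [hH]; positivity
  -- hafnian bounds
  have hhaf : ∀ I ∈ T, h ≤ hafnian (repMat B I) ∧ hafnian (repMat B I) ≤ H := by
    intro I hI
    have hmI : ∑ n, I n = 2 * k := Finset.Nat.mem_antidiagonalTuple.mp hI
    have hbd := hafnian_bounds2 hmI (repMat B I) bmin bmax hbminpos.le
      (fun i j => hbmin_lb _ _) (fun i j => hbmax_ub _ _)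
    rw [hh, hH, hF]
    exact hbd
  -- sum splitting
  have hsub : T.filter (fun I => ¬ 0 ≤ a I) ⊆ T.filter (fun I => a I ≤ 0) := by
    apply Finset.monotone_filter_right
    intro I _ hI
    exact le_of_not_ge hI
  have hNeq : ∀ (w : ℝ), ∑ I ∈ T.filter (fun I => a I ≤ 0), a I * w
      = ∑ I ∈ T.filter (fun I => ¬ 0 ≤ a I), a I * w := by
    intro w
    refine (Finset.sum_subset hsub ?_).symm
    intro I hI hnI
    have h1 : a I ≤ 0 := (Finset.mem_filter.mp hI).2
    have h2 : 0 ≤ a I := by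
      by_contra hcon
      exact hnI (Finset.mem_filter.mpr ⟨(Finset.mem_filter.mp hI).1, hcon⟩)
    rw [le_antisymm h1 h2]; ring
  have step1 : (∑ I ∈ T.filter (fun I => 0 ≤ a I), a I) * h ^ 2
      + (∑ I ∈ T.filter (fun I => a I ≤ 0), a I) * H ^ 2
      ≤ ∑ I ∈ T, a I * (hafnian (repMat B I)) ^ 2 := by
    rw [← Finset.sum_filter_add_sum_filter_not T (fun I => 0 ≤ a I)
      (fun I => a I * (hafnian (repMat B I)) ^ 2)]
    apply add_le_add
    · rw [Finset.sum_mul]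
      apply Finset.sum_le_sum
      intro I hI
      have hIT : I ∈ T := (Finset.mem_filter.mp hI).1
      have ha : 0 ≤ a I := (Finset.mem_filter.mp hI).2
      have := (hhaf I hIT).1
      have hsq : h ^ 2 ≤ (hafnian (repMat B I)) ^ 2 :=
        pow_le_pow_left₀ hhpos.le this 2
      exact mul_le_mul_of_nonneg_left hsq ha
    · rw [Finset.sum_mul, hNeq]
      apply Finset.sum_le_sum
      intro I hI
      have hIT : I ∈ T := (Finset.mem_filter.mp hI).1
      have ha : a I ≤ 0 := le_of_not_ge (Finset.mem_filter.mp hI).2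
      have h1 := (hhaf I hIT).1
      have h2 := (hhaf I hIT).2
      have hsq : (hafnian (repMat B I)) ^ 2 ≤ H ^ 2 :=
        pow_le_pow_left₀ (hhpos.le.trans h1) h2 2
      exact mul_le_mul_of_nonpos_left hsq ha
  -- step2 : use hbound
  have hH2 : H ^ 2 = (bmax / bmin) ^ (2 * k) * h ^ 2 := by
    rw [hh, hH]
    rw [div_pow, mul_pow, mul_pow, ← pow_mul, ← pow_mul]
    rw [mul_comm (2 : ℕ) k] at *
    field_simp
  have step2 : h ^ 2 * (c * (k : ℝ) ^ q * γ ^ k / ((2 * k).factorial : ℝ))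
      ≤ (∑ I ∈ T.filter (fun I => 0 ≤ a I), a I) * h ^ 2
        + (∑ I ∈ T.filter (fun I => a I ≤ 0), a I) * H ^ 2 := by
    rw [hH2]
    calc h ^ 2 * (c * (k : ℝ) ^ q * γ ^ k / ((2 * k).factorial : ℝ))
        ≤ h ^ 2 * ((∑ I ∈ T.filter (fun I => 0 ≤ a I), a I)
          + (bmax / bmin) ^ (2 * k) * ∑ I ∈ T.filter (fun I => a I ≤ 0), a I) :=
          mul_le_mul_of_nonneg_left hb (sq_nonneg h)
      _ = (∑ I ∈ T.filter (fun I => 0 ≤ a I), a I) * h ^ 2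
          + (∑ I ∈ T.filter (fun I => a I ≤ 0), a I) * ((bmax / bmin) ^ (2 * k) * h ^ 2) := by
          ring
  -- step3 : numeric lower bound
  have hk0 : (0 : ℝ) < k := by exact_mod_cast hk1
  set CB := (Nat.centralBinom k : ℝ) with hCB
  have hCBpos : (0:ℝ) < CB := by rw [hCB]; exact_mod_cast k.centralBinom_pos
  have hfactN : (2 * k).factorial = k.centralBinom * k.factorial * k.factorial := by
    have hcc := Nat.choose_mul_factorial_mul_factorial (show k ≤ 2 * k by omega)
    rw [show 2 * k - k = k by omega] at hcc
    rw [Nat.centralBinom_eq_two_mul_choose]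
    omega
  have hfact : ((2 * k).factorial : ℝ) = CB * k.factorial * k.factorial := by
    rw [hCB]; exact_mod_cast hfactN
  have hsqrtk : 0 < Real.sqrt k := Real.sqrt_pos.mpr hk0
  have hsqrtpi : 0 < Real.sqrt π := Real.sqrt_pos.mpr Real.pi_pos
  have hCBlow : (4:ℝ) ^ k ≤ 2 * Real.sqrt k * CB := by
    have h16 := lemB k hk1
    have e1 : ((4:ℝ) ^ k) = Real.sqrt ((16:ℝ) ^ k) := by
      rw [show (16:ℝ) = 4 ^ 2 by norm_num, ← pow_mul, mul_comm 2 k, pow_mul,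
        Real.sqrt_sq (by positivity)]
    have e2 : Real.sqrt (4 * k * CB ^ 2) = 2 * Real.sqrt k * CB := by
      rw [show (4:ℝ) * k * CB ^ 2 = (2 * Real.sqrt k * CB) ^ 2 by
        rw [mul_pow, mul_pow, Real.sq_sqrt hk0.le]; ring]
      exact Real.sqrt_sq (by positivity)
    rw [e1, ← e2]
    exact Real.sqrt_le_sqrt h16
  have hmid : Real.exp (1 / 25 - 1 / 6) / (Real.sqrt π * Real.sqrt k) ≤ CB / 4 ^ k := by
    have h1 : Real.exp (1 / 25 - 1 / 6) / (Real.sqrt π * Real.sqrt k)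
        ≤ 1 / (2 * Real.sqrt k) := by
      rw [div_le_div_iff₀ (by positivity) (by positivity)]
      have := mul_le_mul_of_nonneg_right numC
        (by positivity : (0:ℝ) ≤ 2 * Real.sqrt k)
      nlinarith
    have h2 : 1 / (2 * Real.sqrt k) ≤ CB / 4 ^ k := by
      rw [div_le_div_iff₀ (by positivity) (by positivity)]
      nlinarith [hCBlow]
    linarith
  have hrw : (k:ℝ) ^ (1 / 2 - q : ℝ) = Real.sqrt k / (k:ℝ) ^ q := by
    rw [Real.rpow_sub hk0, ← Real.sqrt_eq_rpow]
  have hkq : (0:ℝ) < (k:ℝ) ^ q := Real.rpow_pos_of_pos hk0 q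
  have hEq1 : (c / Real.sqrt π) * Real.exp (1 / 25 - 1 / 6)
        * ((γ * bmin ^ 2) ^ k / (k : ℝ) ^ (1 / 2 - q : ℝ))
      = (c * (γ * bmin ^ 2) ^ k * (k:ℝ) ^ q)
        * (Real.exp (1 / 25 - 1 / 6) / (Real.sqrt π * Real.sqrt k)) := by
    rw [hrw]; field_simp
  have hEq2 : h ^ 2 * (c * (k : ℝ) ^ q * γ ^ k / ((2 * k).factorial : ℝ))
      = (c * (γ * bmin ^ 2) ^ k * (k:ℝ) ^ q) * (CB / 4 ^ k) := by
    rw [hh, hF, hfact, show (4:ℝ) = 2 ^ 2 by norm_num, ← pow_mul]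
    have hfne : (k.factorial : ℝ) ≠ 0 := by positivity
    field_simp
    ring
  have hzkpos : (0:ℝ) < (γ * bmin ^ 2) ^ k := by positivity
  calc (c / Real.sqrt π) * Real.exp (1 / 25 - 1 / 6)
        * ((γ * bmin ^ 2) ^ k / (k : ℝ) ^ (1 / 2 - q : ℝ))
      = (c * (γ * bmin ^ 2) ^ k * (k:ℝ) ^ q)
        * (Real.exp (1 / 25 - 1 / 6) / (Real.sqrt π * Real.sqrt k)) := hEq1
    _ ≤ (c * (γ * bmin ^ 2) ^ k * (k:ℝ) ^ q) * (CB / 4 ^ k) :=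
        mul_le_mul_of_nonneg_left hmid (by positivity)
    _ = h ^ 2 * (c * (k : ℝ) ^ q * γ ^ k / ((2 * k).factorial : ℝ)) := hEq2.symm
    _ ≤ (∑ I ∈ T.filter (fun I => 0 ≤ a I), a I) * h ^ 2
        + (∑ I ∈ T.filter (fun I => a I ≤ 0), a I) * H ^ 2 := step2
    _ ≤ ∑ I ∈ T, a I * (hafnian (repMat B I)) ^ 2 := step1

theorem gbs_mu_hafsq_lower_bound (N : ℕ) (hN : 0 < N)
    (B : Matrix (Fin N) (Fin N) ℝ) (hB : B.PosDef) (hpos : ∀ i j, 0 < B i j)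
    (bmin bmax : ℝ)
    (hbmin_lb : ∀ i j, bmin ≤ B i j) (hbmin_mem : ∃ i j, B i j = bmin)
    (hbmax_ub : ∀ i j, B i j ≤ bmax) (hbmax_mem : ∃ i j, B i j = bmax)
    (K : ℕ∞)
    (a : (Fin N → ℕ) → ℝ)
    (c q γ : ℝ) (hc : 0 < c) (hγ : 0 < γ)
    (hbound : ∀ k : ℕ, 1 ≤ k → (k : ℕ∞) ≤ K →
      c * (k : ℝ) ^ q * γ ^ k / ((2 * k).factorial : ℝ)
        ≤ (∑ I ∈ (Finset.Nat.antidiagonalTuple N (2 * k)).filter (fun I => 0 ≤ a I), a I)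
          + (bmax / bmin) ^ (2 * k) *
            ∑ I ∈ (Finset.Nat.antidiagonalTuple N (2 * k)).filter (fun I => a I ≤ 0), a I)
    (hconv : K = ⊤ → γ * bmin ^ 2 < 1)
    (hsum : Summable (fun k : ℕ => if (k : ℕ∞) ≤ K then
      ∑ I ∈ Finset.Nat.antidiagonalTuple N (2 * k), a I * (hafnian (repMat B I)) ^ 2
      else 0)) :
    a (fun _ => 0) + (c / Real.sqrt π) * Real.exp (1 / 25 - 1 / 6)
        * polylog (1 / 2 - q) K (γ * bmin ^ 2)
      ≤ ∑' k : ℕ, (if (k : ℕ∞) ≤ K then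
          ∑ I ∈ Finset.Nat.antidiagonalTuple N (2 * k), a I * (hafnian (repMat B I)) ^ 2
        else 0) := by
  have hbminpos : 0 < bmin := by
    obtain ⟨i, j, hij⟩ := hbmin_mem
    rw [← hij]; exact hpos i j
  set z := γ * bmin ^ 2 with hz
  have hzpos : 0 < z := by rw [hz]; positivity
  set C : ℝ := (c / Real.sqrt π) * Real.exp (1 / 25 - 1 / 6) with hCdef
  have hsqrtpi : 0 < Real.sqrt π := Real.sqrt_pos.mpr Real.pi_pos
  have hCpos : 0 < C := by rw [hCdef]; positivity
  set p : ℕ → ℝ := fun k =>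
    if 1 ≤ k ∧ (k : ℕ∞) ≤ K then z ^ k / (k : ℝ) ^ (1 / 2 - q : ℝ) else 0 with hp
  have hpnonneg : ∀ k, 0 ≤ p k := by
    intro k
    rw [hp]
    dsimp only
    split
    · have : (0:ℝ) ≤ (k : ℝ) ^ (1 / 2 - q : ℝ) := Real.rpow_nonneg (Nat.cast_nonneg k) _
      positivity
    · exact le_rfl
  have hpsum : Summable p := by
    induction K using ENat.recTopCoe with
    | top =>
      have hz1 : z < 1 := hconv rfl
      set m : ℕ := ⌈q⌉₊ with hm
      have hmaj : Summable (fun k : ℕ => (k : ℝ) ^ m * z ^ k) := by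
        apply summable_pow_mul_geometric_of_norm_lt_one
        rw [Real.norm_eq_abs, abs_of_nonneg hzpos.le]
        exact hz1
      apply Summable.of_nonneg_of_le hpnonneg ?_ hmaj
      intro k
      rw [hp]
      dsimp only
      split
      · rename_i hcond
        have hk1 : 1 ≤ k := hcond.1
        have hk0 : (0:ℝ) < k := by exact_mod_cast hk1
        have h1 : z ^ k / (k : ℝ) ^ (1 / 2 - q : ℝ)
            = z ^ k * (k : ℝ) ^ (-(1 / 2 - q) : ℝ) := by
          rw [Real.rpow_neg hk0.le, div_eq_mul_inv]
        rw [h1]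
        have h2 : (k : ℝ) ^ (-(1 / 2 - q) : ℝ) ≤ (k : ℝ) ^ (m : ℝ) := by
          apply Real.rpow_le_rpow_of_exponent_le (by exact_mod_cast hk1)
          have := Nat.le_ceil q
          rw [hm]; push_cast; linarith
        rw [Real.rpow_natCast] at h2
        calc z ^ k * (k : ℝ) ^ (-(1 / 2 - q) : ℝ)
            ≤ z ^ k * (k : ℝ) ^ m := by
              apply mul_le_mul_of_nonneg_left h2 (by positivity)
          _ = (k : ℝ) ^ m * z ^ k := by ring
      · positivity
    | coe n =>
      apply summable_of_ne_finset_zero (s := Finset.range (n + 1))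
      intro k hk
      rw [hp]
      dsimp only
      rw [if_neg]
      rintro ⟨-, hle⟩
      have : k ≤ n := by exact_mod_cast hle
      exact hk (Finset.mem_range.mpr (by omega))
  have hf0 : (if ((0:ℕ) : ℕ∞) ≤ K then
      ∑ I ∈ Finset.Nat.antidiagonalTuple N (2 * 0), a I * (hafnian (repMat B I)) ^ 2
      else 0) = a (fun _ => 0) := by
    rw [if_pos (by exact_mod_cast zero_le)]
    rw [show 2 * 0 = 0 by norm_num, Finset.Nat.antidiagonalTuple_zero_right,
      Finset.sum_singleton]
    rw [hafnian_size_zero (by simp) (repMat B 0)]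
    norm_num
    rfl
  set g : ℕ → ℝ := fun k => (if k = 0 then a (fun _ => 0) else 0) + C * p k with hg
  have hg1sum : Summable (fun k : ℕ => if k = 0 then a (fun _ => 0) else 0) := by
    apply summable_of_ne_finset_zero (s := {0})
    intro k hk
    rw [if_neg (by simpa using hk)]
  have hgsum : Summable g := hg1sum.add (hpsum.mul_left C)
  have hgle : ∀ k : ℕ, g k ≤ (if (k : ℕ∞) ≤ K then
      ∑ I ∈ Finset.Nat.antidiagonalTuple N (2 * k), a I * (hafnian (repMat B I)) ^ 2
      else 0) := by
    intro k
    rw [hg]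
    dsimp only
    rcases Nat.eq_zero_or_pos k with hk0 | hk1
    · subst hk0
      rw [if_pos rfl, hf0, hp]
      dsimp only
      rw [if_neg (by simp)]
      simp
    · by_cases hkK : (k : ℕ∞) ≤ K
      · rw [if_pos hkK, if_neg (by omega), hp]
        dsimp only
        rw [if_pos ⟨hk1, hkK⟩]
        have hpk := perk N hN B bmin bmax hbminpos hbmin_lb hbmax_ub a c q γ hc hγ
          k hk1 (hbound k hk1 hkK)
        rw [hCdef, hz]
        linarith [hpk]
      · rw [if_neg hkK, if_neg (by omega), hp]
        dsimp only
        rw [if_neg (fun hcon => hkK hcon.2)]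
        simp
  have hmain := Summable.tsum_le_tsum hgle hgsum hsum
  have htg : ∑' k, g k = a (fun _ => 0) + C * polylog (1 / 2 - q) K z := by
    rw [hg]
    rw [Summable.tsum_add hg1sum (hpsum.mul_left C)]
    congr 1
    · exact tsum_ite_eq 0 (fun _ => a fun _ => 0)
    · rw [tsum_mul_left]
      rfl
  rw [htg] at hmain
  exact hmain
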